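/- Let (H, ‖·‖) be a separable Hilbert space and let A ∈ 𝓗(H) be a Hilbert–Schmidt operator with canonical (SVD) expansion A = Σ_{i=1}^∞ σ_i(A) ⟨·, u_i⟩ v_i, where {u_i}, {v_i} are orthonormal. Fix n ∈ ℕ₊. Then for every orthonormal set {ũ_1, …, ũ_n} ⊂ H one has Σ_{i=1}^n ‖A ũ_i‖² ≤ Σ_{i=1}^n σ_i(A)². Moreover, if σ_n(A) > σ_{n+1}(A), then equality holds if and only if span{ũ_1, …, ũ_n} = span{u_1, …, u_n}. -/

import Mathlib

open scoped InnerProductSpace RealInnerProductSpace ENNReal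
open Filter Topology

/-- The `n`-th singular value of an operator `A`, following Allahverdiev's
characterization: `σ_n(A) := inf {‖A - L‖ : L compact, rank L ≤ n - 1}`. -/
noncomputable def sval {H : Type*} [NormedAddCommGroup H] [InnerProductSpace ℝ H]
    (A : H →L[ℝ] H) (n : ℕ) : ℝ :=
  sInf {r : ℝ | ∃ L : H →L[ℝ] H, IsCompactOperator L ∧
    Module.rank ℝ (LinearMap.range (L : H →ₗ[ℝ] H)) ≤ ((n - 1 : ℕ) : Cardinal) ∧ r = ‖A - L‖}

/-- The rank-one operator `x ↦ ⟪u, x⟫ • v`. -/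
noncomputable def rankOne {H : Type*} [NormedAddCommGroup H] [InnerProductSpace ℝ H]
    (u v : H) : H →L[ℝ] H := (innerSL ℝ u).smulRight v

/-- The squared Hilbert–Schmidt norm `‖A‖_HS² = Σ_{i=1}^∞ σ_i(A)²`, valued in `ℝ≥0∞`. -/
noncomputable def hsNormSq {H : Type*} [NormedAddCommGroup H] [InnerProductSpace ℝ H]
    (A : H →L[ℝ] H) : ℝ≥0∞ := ∑' i : ℕ, ENNReal.ofReal (sval A (i + 1) ^ 2)

section AuxReal

open Finset

/-- Majorization-type bound: for a nonneg antitone sequence `a` and weights `t ∈ [0,1]`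
with total mass at most `n`, one has `∑' a·t ≤ ∑_{j<n} a j`, with an equality criterion. -/
lemma maj_aux {a t : ℕ → ℝ} {n : ℕ}
    (ha0 : ∀ j, 0 ≤ a j) (hamono : Antitone a)
    (ht0 : ∀ j, 0 ≤ t j) (ht1 : ∀ j, t j ≤ 1) (hst : Summable t)
    (htn : (∑' j, t j) ≤ (n : ℝ)) (hsat : Summable fun j => a j * t j) :
    (∑' j, a j * t j) ≤ ∑ j ∈ range n, a j ∧
    ((∑' j, a j * t j) = ∑ j ∈ range n, a j → ∀ j < n, a n < a j → t j = 1) := by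
  have hTail : Summable fun k => a (k + n) * t (k + n) := (summable_nat_add_iff n).2 hsat
  have hTt : Summable fun k => t (k + n) := (summable_nat_add_iff n).2 hst
  have hsplitA := hsat.sum_add_tsum_nat_add n
  have hsplitT := hst.sum_add_tsum_nat_add n
  have E1 : (∑' k, a (k + n) * t (k + n)) ≤ ∑' k, a n * t (k + n) :=
    Summable.tsum_le_tsum (fun k => mul_le_mul_of_nonneg_right (hamono (Nat.le_add_left n k)) (ht0 _))
      hTail (hTt.mul_left _)
  have E2 : (∑' k, a n * t (k + n)) = a n * ∑' k, t (k + n) := tsum_mul_left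
  have E3 : (∑' k, t (k + n)) ≤ (n : ℝ) - ∑ j ∈ range n, t j := by linarith
  have E4 : a n * (∑' k, t (k + n)) ≤ a n * ((n : ℝ) - ∑ j ∈ range n, t j) :=
    mul_le_mul_of_nonneg_left E3 (ha0 n)
  have E5 : (n : ℝ) - ∑ j ∈ range n, t j = ∑ j ∈ range n, (1 - t j) := by
    rw [Finset.sum_sub_distrib, Finset.sum_const, Finset.card_range, nsmul_eq_mul, mul_one]
  have E6 : a n * ((n : ℝ) - ∑ j ∈ range n, t j) = ∑ j ∈ range n, a n * (1 - t j) := by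
    rw [E5, Finset.mul_sum]
  have E7 : (∑ j ∈ range n, a n * (1 - t j)) ≤ ∑ j ∈ range n, a j * (1 - t j) :=
    Finset.sum_le_sum fun j hj =>
      mul_le_mul_of_nonneg_right (hamono (Finset.mem_range.1 hj).le) (by linarith [ht1 j])
  have E8 : (∑ j ∈ range n, a j * (1 - t j))
      = (∑ j ∈ range n, a j) - ∑ j ∈ range n, a j * t j := by
    rw [← Finset.sum_sub_distrib]
    exact Finset.sum_congr rfl fun j _ => by ring
  constructor
  · linarith
  · intro hEq j hj hgap
    have hE8' : (∑ j ∈ range n, (a j - a n) * (1 - t j))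
        = (∑ j ∈ range n, a j * (1 - t j)) - ∑ j ∈ range n, a n * (1 - t j) := by
      rw [← Finset.sum_sub_distrib]
      exact Finset.sum_congr rfl fun j _ => by ring
    have h9 : (∑ j ∈ range n, (a j - a n) * (1 - t j)) ≤ 0 := by linarith
    have hnn : ∀ k ∈ range n, 0 ≤ (a k - a n) * (1 - t k) := fun k hk =>
      mul_nonneg (sub_nonneg.2 (hamono (Finset.mem_range.1 hk).le))
        (sub_nonneg.2 (ht1 k))
    have hz := (Finset.sum_eq_zero_iff_of_nonneg hnn).1
      (le_antisymm h9 (Finset.sum_nonneg hnn)) j (Finset.mem_range.2 hj)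
    rcases mul_eq_zero.1 hz with h | h
    · exfalso; linarith
    · linarith

end AuxReal

section AuxHilbert

variable {H : Type*} [NormedAddCommGroup H] [InnerProductSpace ℝ H]

lemma sval_nonneg (A : H →L[ℝ] H) (m : ℕ) : 0 ≤ sval A m :=
  Real.sInf_nonneg (by rintro r ⟨L, -, -, rfl⟩; exact norm_nonneg _)

lemma sval_antitone (A : H →L[ℝ] H) : Antitone (sval A) := by
  intro m k hmk
  apply csInf_le_csInf
  · exact ⟨0, by rintro r ⟨L, -, -, rfl⟩; exact norm_nonneg _⟩
  · refine ⟨‖A‖, 0, isCompactOperator_zero, ?_, by simp⟩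
    have h0 : LinearMap.range ((0 : H →L[ℝ] H) : H →ₗ[ℝ] H) = ⊥ := by ext x; simp [eq_comm]
    rw [h0, rank_bot]
    exact zero_le
  · rintro r ⟨L, hL, hrk, rfl⟩
    exact ⟨L, hL, hrk.trans (by exact_mod_cast Nat.cast_le.2 (Nat.sub_le_sub_right hmk 1)), rfl⟩

lemma bessel_identity {n : ℕ} {w : Fin n → H} (hw : Orthonormal ℝ w) (x : H) :
    ‖x - ∑ i, ⟪w i, x⟫_ℝ • w i‖ ^ 2 = ‖x‖ ^ 2 - ∑ i, ⟪w i, x⟫_ℝ ^ 2 := by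
  have hxp : ⟪x, ∑ i, ⟪w i, x⟫_ℝ • w i⟫_ℝ = ∑ i, ⟪w i, x⟫_ℝ ^ 2 := by
    rw [inner_sum]
    refine Finset.sum_congr rfl fun i _ => ?_
    rw [real_inner_smul_right, real_inner_comm x (w i)]
    ring
  have hpp : ‖∑ i, ⟪w i, x⟫_ℝ • w i‖ ^ 2 = ∑ i, ⟪w i, x⟫_ℝ ^ 2 := by
    rw [← real_inner_self_eq_norm_sq]
    have := hw.inner_sum (fun i => ⟪w i, x⟫_ℝ) (fun i => ⟪w i, x⟫_ℝ) (s := Finset.univ)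
    simpa [pow_two] using this
  have hns := norm_sub_sq_real x (∑ i, ⟪w i, x⟫_ℝ • w i)
  rw [hns, hxp, hpp]; ring

lemma sum_inner_sq_eq_iff_mem_span {n : ℕ} {w : Fin n → H} (hw : Orthonormal ℝ w) (x : H) :
    (∑ i, ⟪w i, x⟫_ℝ ^ 2 = ‖x‖ ^ 2) ↔ x ∈ Submodule.span ℝ (Set.range w) := by
  constructor
  · intro h
    have h0 : ‖x - ∑ i, ⟪w i, x⟫_ℝ • w i‖ ^ 2 = 0 := by rw [bessel_identity hw x, h]; ring
    have hx : x = ∑ i, ⟪w i, x⟫_ℝ • w i := by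
      have := pow_eq_zero_iff (n := 2) (by norm_num) |>.1 h0
      rw [norm_eq_zero, sub_eq_zero] at this
      exact this
    rw [hx]
    exact Submodule.sum_mem _ fun i _ =>
      Submodule.smul_mem _ _ (Submodule.subset_span ⟨i, rfl⟩)
  · intro hx
    obtain ⟨c, hc⟩ := (Submodule.mem_span_range_iff_exists_fun ℝ).1 hx
    have hcoef : ∀ j, ⟪w j, x⟫_ℝ = c j := fun j => by
      rw [← hc]; exact hw.inner_right_fintype c j
    have hx' : x - ∑ i, ⟪w i, x⟫_ℝ • w i = 0 := by
      have hsum : (∑ i, ⟪w i, x⟫_ℝ • w i) = ∑ i, c i • w i :=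
        Finset.sum_congr rfl fun i _ => by rw [hcoef]
      rw [hsum, hc, sub_self]
    have hb := bessel_identity hw x
    rw [hx'] at hb
    simp at hb
    linarith

end AuxHilbert

/-- Let `A` be a Hilbert–Schmidt operator on a separable Hilbert space with
canonical (SVD) expansion `A = Σ_{i=1}^∞ σ_i(A) ⟨·, u_i⟩ v_i` and fix `n ≥ 1`. Then for every
orthonormal family `w_1, …, w_n` one has `Σ_{i=1}^n ‖A w_i‖² ≤ Σ_{i=1}^n σ_i(A)²`; moreover,
if `σ_n(A) > σ_{n+1}(A)`, equality holds iff `span {w_1, …, w_n} = span {u_1, …, u_n}`. -/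
theorem sum_norm_sq_le_sum_sval_sq
    {H : Type*} [NormedAddCommGroup H] [InnerProductSpace ℝ H]
    [CompleteSpace H] [TopologicalSpace.SeparableSpace H]
    (A : H →L[ℝ] H) (hA : IsCompactOperator A) (hAhs : hsNormSq A ≠ ⊤)
    (u v : ℕ → H) (hu : Orthonormal ℝ u) (hv : Orthonormal ℝ v)
    (hexp : Tendsto (fun m : ℕ => ∑ i ∈ Finset.range m, sval A (i + 1) • rankOne (u i) (v i))
      atTop (𝓝 A))
    (n : ℕ) (hn : 0 < n) :
    (∀ w : Fin n → H, Orthonormal ℝ w →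
      (∑ i : Fin n, ‖A (w i)‖ ^ 2) ≤ ∑ i ∈ Finset.range n, sval A (i + 1) ^ 2) ∧
    (sval A (n + 1) < sval A n →
      ∀ w : Fin n → H, Orthonormal ℝ w →
        ((∑ i : Fin n, ‖A (w i)‖ ^ 2) = (∑ i ∈ Finset.range n, sval A (i + 1) ^ 2) ↔
          Submodule.span ℝ (Set.range w) = Submodule.span ℝ (u '' Set.Iio n))) := by
  classical
  set a : ℕ → ℝ := fun j => sval A (j + 1) ^ 2 with ha_def
  have ha0 : ∀ j, 0 ≤ a j := fun j => sq_nonneg _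
  have hamono : Antitone a := fun i j hij =>
    pow_le_pow_left₀ (sval_nonneg A _) (sval_antitone A (Nat.succ_le_succ hij)) 2
  have hsa : Summable a := by
    unfold hsNormSq at hAhs
    have := ENNReal.summable_toReal hAhs
    simpa [ENNReal.toReal_ofReal, sq_nonneg] using this
  -- key pointwise SVD formula
  have key : ∀ x : H, HasSum (fun j => a j * ⟪u j, x⟫_ℝ ^ 2) (‖A x‖ ^ 2) := by
    intro x
    have hev : Tendsto
        (fun m : ℕ => (∑ i ∈ Finset.range m, sval A (i + 1) • rankOne (u i) (v i)) x)
        atTop (𝓝 (A x)) :=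
      ((ContinuousLinearMap.apply ℝ H x).continuous.tendsto A).comp hexp
    have happ : ∀ m : ℕ,
        (∑ i ∈ Finset.range m, sval A (i + 1) • rankOne (u i) (v i)) x
          = ∑ i ∈ Finset.range m, (sval A (i + 1) * ⟪u i, x⟫_ℝ) • v i := by
      intro m
      rw [ContinuousLinearMap.sum_apply]
      refine Finset.sum_congr rfl fun i _ => ?_
      simp [rankOne, smul_smul]
    have hnorm : ∀ m : ℕ,
        ‖∑ i ∈ Finset.range m, (sval A (i + 1) * ⟪u i, x⟫_ℝ) • v i‖ ^ 2
          = ∑ i ∈ Finset.range m, a i * ⟪u i, x⟫_ℝ ^ 2 := by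
      intro m
      rw [← real_inner_self_eq_norm_sq]
      have h := hv.inner_sum (fun i => sval A (i + 1) * ⟪u i, x⟫_ℝ)
        (fun i => sval A (i + 1) * ⟪u i, x⟫_ℝ) (s := Finset.range m)
      rw [h]
      refine Finset.sum_congr rfl fun i _ => ?_
      simp only [ha_def, starRingEnd_apply, star_trivial]
      ring
    have hlim : Tendsto (fun m : ℕ => ∑ i ∈ Finset.range m, a i * ⟪u i, x⟫_ℝ ^ 2)
        atTop (𝓝 (‖A x‖ ^ 2)) := by
      have h2 : Tendsto
          (fun m : ℕ => ‖(∑ i ∈ Finset.range m, sval A (i + 1) • rankOne (u i) (v i)) x‖ ^ 2)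
          atTop (𝓝 (‖A x‖ ^ 2)) := hev.norm.pow 2
      refine h2.congr fun m => ?_
      rw [happ m, hnorm m]
    have hnonneg : ∀ j, 0 ≤ a j * ⟪u j, x⟫_ℝ ^ 2 := fun j => mul_nonneg (ha0 j) (sq_nonneg _)
    have hmonoP : Monotone (fun m : ℕ => ∑ i ∈ Finset.range m, a i * ⟪u i, x⟫_ℝ ^ 2) :=
      fun p q hpq => Finset.sum_le_sum_of_subset_of_nonneg (Finset.range_subset_range.2 hpq)
        fun i _ _ => hnonneg i
    have hsum : Summable fun j => a j * ⟪u j, x⟫_ℝ ^ 2 :=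
      summable_of_sum_range_le hnonneg fun m => hmonoP.ge_of_tendsto hlim m
    have hhs := hsum.hasSum
    rwa [tendsto_nhds_unique hsum.hasSum.tendsto_sum_nat hlim] at hhs
  -- the combined sum for an orthonormal family `w`
  have hS : ∀ w : Fin n → H, Orthonormal ℝ w →
      HasSum (fun j => a j * ∑ i : Fin n, ⟪u j, w i⟫_ℝ ^ 2) (∑ i : Fin n, ‖A (w i)‖ ^ 2) := by
    intro w hw
    have h1 : HasSum (fun j => ∑ i : Fin n, a j * ⟪u j, w i⟫_ℝ ^ 2)
        (∑ i : Fin n, ‖A (w i)‖ ^ 2) := hasSum_sum fun i _ => key (w i)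
    have h2 : (fun j => ∑ i : Fin n, a j * ⟪u j, w i⟫_ℝ ^ 2)
        = fun j => a j * ∑ i : Fin n, ⟪u j, w i⟫_ℝ ^ 2 := by
      funext j; rw [Finset.mul_sum]
    rwa [h2] at h1
  have ht0 : ∀ (w : Fin n → H) (j : ℕ), 0 ≤ ∑ i : Fin n, ⟪u j, w i⟫_ℝ ^ 2 := fun w j =>
    Finset.sum_nonneg fun i _ => sq_nonneg _
  have ht1 : ∀ (w : Fin n → H), Orthonormal ℝ w →
      ∀ j, (∑ i : Fin n, ⟪u j, w i⟫_ℝ ^ 2) ≤ 1 := by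
    intro w hw j
    have hconv : (∑ i : Fin n, ⟪u j, w i⟫_ℝ ^ 2) = ∑ i : Fin n, ‖⟪w i, u j⟫_ℝ‖ ^ 2 :=
      Finset.sum_congr rfl fun i _ => by rw [real_inner_comm, Real.norm_eq_abs, sq_abs]
    have hb := hw.sum_inner_products_le (𝕜 := ℝ) (u j) (s := Finset.univ)
    have h1 : ‖u j‖ = 1 := hu.1 j
    rw [hconv]
    calc (∑ i : Fin n, ‖⟪w i, u j⟫_ℝ‖ ^ 2) ≤ ‖u j‖ ^ 2 := hb
      _ = 1 := by rw [h1]; norm_num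
  have hsum_each : ∀ (w : Fin n → H) (i : Fin n), Summable fun j => ⟪u j, w i⟫_ℝ ^ 2 := by
    intro w i
    have := hu.inner_products_summable (𝕜 := ℝ) (w i)
    simpa [Real.norm_eq_abs, sq_abs] using this
  have htsummable : ∀ w : Fin n → H, Summable fun j => ∑ i : Fin n, ⟪u j, w i⟫_ℝ ^ 2 :=
    fun w => summable_sum fun i _ => hsum_each w i
  have httsum : ∀ w : Fin n → H, Orthonormal ℝ w →
      (∑' j, ∑ i : Fin n, ⟪u j, w i⟫_ℝ ^ 2) ≤ (n : ℝ) := by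
    intro w hw
    rw [Summable.tsum_finsetSum fun i _ => hsum_each w i]
    have hbound : ∀ i : Fin n, (∑' j, ⟪u j, w i⟫_ℝ ^ 2) ≤ 1 := by
      intro i
      have hb := hu.tsum_inner_products_le (𝕜 := ℝ) (w i)
      have hw1 : ‖w i‖ = 1 := hw.1 i
      have hconv : (∑' j, ⟪u j, w i⟫_ℝ ^ 2) = ∑' j, ‖⟪u j, w i⟫_ℝ‖ ^ 2 :=
        tsum_congr fun j => by rw [Real.norm_eq_abs, sq_abs]
      rw [hconv]
      calc (∑' j, ‖⟪u j, w i⟫_ℝ‖ ^ 2) ≤ ‖w i‖ ^ 2 := hb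
        _ = 1 := by rw [hw1]; norm_num
    calc (∑ i : Fin n, ∑' j, ⟪u j, w i⟫_ℝ ^ 2) ≤ ∑ _i : Fin n, (1 : ℝ) :=
          Finset.sum_le_sum fun i _ => hbound i
      _ = n := by simp
  -- Part 1
  have part1 : ∀ w : Fin n → H, Orthonormal ℝ w →
      (∑ i : Fin n, ‖A (w i)‖ ^ 2) ≤ ∑ j ∈ Finset.range n, a j := by
    intro w hw
    have hSw := hS w hw
    rw [← hSw.tsum_eq]
    exact (maj_aux ha0 hamono (ht0 w) (ht1 w hw) (htsummable w) (httsum w hw) hSw.summable).1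
  refine ⟨part1, ?_⟩
  intro hgap w hw
  have hgapj : ∀ j < n, a n < a j := by
    intro j hj
    have h1 : sval A (n + 1) ^ 2 < sval A n ^ 2 :=
      pow_lt_pow_left₀ hgap (sval_nonneg A _) (by norm_num)
    have h2 : a (n - 1) = sval A n ^ 2 := by
      have hpred : (n - 1) + 1 = n := Nat.succ_pred_eq_of_pos hn
      simp only [ha_def, hpred]
    have h3 : a (n - 1) ≤ a j := hamono (Nat.le_pred_of_lt hj)
    have h4 : a n = sval A (n + 1) ^ 2 := rfl
    linarith
  constructor
  · -- equality ⇒ spans are equal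
    intro heq
    have hSw := hS w hw
    have htsum_eq : (∑' j, a j * ∑ i : Fin n, ⟪u j, w i⟫_ℝ ^ 2) = ∑ j ∈ Finset.range n, a j := by
      rw [hSw.tsum_eq]; exact heq
    have hteq1 : ∀ j < n, (∑ i : Fin n, ⟪u j, w i⟫_ℝ ^ 2) = 1 := fun j hj =>
      (maj_aux ha0 hamono (ht0 w) (ht1 w hw) (htsummable w) (httsum w hw) hSw.summable).2
        htsum_eq j hj (hgapj j hj)
    have humem : ∀ j < n, u j ∈ Submodule.span ℝ (Set.range w) := by
      intro j hj
      apply (sum_inner_sq_eq_iff_mem_span hw (u j)).1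
      have hconv : (∑ i, ⟪w i, u j⟫_ℝ ^ 2) = ∑ i : Fin n, ⟪u j, w i⟫_ℝ ^ 2 :=
        Finset.sum_congr rfl fun i _ => by rw [real_inner_comm]
      rw [hconv, hteq1 j hj, hu.1 j]
      norm_num
    have hle : Submodule.span ℝ (u '' Set.Iio n) ≤ Submodule.span ℝ (Set.range w) := by
      rw [Submodule.span_le]
      rintro y ⟨k, hk, rfl⟩
      exact humem k hk
    haveI : FiniteDimensional ℝ (Submodule.span ℝ (Set.range w)) :=
      FiniteDimensional.span_of_finite ℝ (Set.finite_range w)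
    have himg : u '' Set.Iio n = Set.range (fun i : Fin n => u (i : ℕ)) := by
      ext y
      constructor
      · rintro ⟨k, hk, rfl⟩; exact ⟨⟨k, hk⟩, rfl⟩
      · rintro ⟨i, rfl⟩; exact ⟨(i : ℕ), i.2, rfl⟩
    have hfr_w : Module.finrank ℝ (Submodule.span ℝ (Set.range w)) = n := by
      rw [finrank_span_eq_card hw.linearIndependent]; simp
    have hfr_u : Module.finrank ℝ (Submodule.span ℝ (u '' Set.Iio n)) = n := by
      rw [himg]
      have hli : LinearIndependent ℝ (fun i : Fin n => u (i : ℕ)) := by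
        have := (hu.comp (fun i : Fin n => (i : ℕ)) Fin.val_injective).linearIndependent
        exact this
      rw [finrank_span_eq_card hli]
      simp
    exact (Submodule.eq_of_le_of_finrank_le hle (by rw [hfr_w, hfr_u])).symm
  · -- spans equal ⇒ equality
    intro hspan
    have hSw := hS w hw
    have ht_lt : ∀ j < n, (∑ i : Fin n, ⟪u j, w i⟫_ℝ ^ 2) = 1 := by
      intro j hj
      have hmem : u j ∈ Submodule.span ℝ (Set.range w) := by
        rw [hspan]; exact Submodule.subset_span ⟨j, hj, rfl⟩
      have hEq := (sum_inner_sq_eq_iff_mem_span hw (u j)).2 hmem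
      have h1 : ‖u j‖ = 1 := hu.1 j
      have hconv : (∑ i : Fin n, ⟪u j, w i⟫_ℝ ^ 2) = ∑ i, ⟪w i, u j⟫_ℝ ^ 2 :=
        Finset.sum_congr rfl fun i _ => by rw [real_inner_comm]
      rw [hconv, hEq, h1]
      norm_num
    have ht_ge : ∀ j, n ≤ j → (∑ i : Fin n, ⟪u j, w i⟫_ℝ ^ 2) = 0 := by
      intro j hj
      apply Finset.sum_eq_zero
      intro i _
      have hker : Submodule.span ℝ (u '' Set.Iio n) ≤ LinearMap.ker (innerSL ℝ (u j) : H →ₗ[ℝ] ℝ) := by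
        rw [Submodule.span_le]
        rintro y ⟨k, hk, rfl⟩
        have hk' : k < n := hk
        have hk0 : ⟪u j, u k⟫_ℝ = 0 := hu.2 (by omega : j ≠ k)
        simpa [LinearMap.mem_ker] using hk0
      have hwi : w i ∈ Submodule.span ℝ (u '' Set.Iio n) := by
        rw [← hspan]; exact Submodule.subset_span ⟨i, rfl⟩
      have hmem := hker hwi
      have h0 : ⟪u j, w i⟫_ℝ = 0 := by simpa [LinearMap.mem_ker] using hmem
      rw [h0]; ring
    have htsum : (∑' j, a j * ∑ i : Fin n, ⟪u j, w i⟫_ℝ ^ 2) = ∑ j ∈ Finset.range n, a j := by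
      rw [tsum_eq_sum (s := Finset.range n)
        (fun j hj => by
          rw [ht_ge j (le_of_not_gt fun h => hj (Finset.mem_range.2 h)), mul_zero])]
      exact Finset.sum_congr rfl fun j hj => by rw [ht_lt j (Finset.mem_range.1 hj), mul_one]
    rw [← hSw.tsum_eq, htsum]
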